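/- (Classical substate theorem) Let P, Q be probability distributions on the same finite set with D(P‖Q) < ∞. For every r > 1, there exist distributions P̃ and R such that ‖P − P̃‖₁ ≤ 2/r and Q = (r−1)/(r·2^{rk}) · P̃ + (1 − (r−1)/(r·2^{rk})) · R, where k = D(P‖Q) + 1. -/

import Mathlib

open Matrix BigOperators
open scoped Kronecker ComplexOrder

noncomputable section

section QIT
variable {n : Type*} [Fintype n] [DecidableEq n]

/-- A density matrix: positive semidefinite with unit trace. -/
def IsDensity (ρ : Matrix n n ℂ) : Prop := ρ.PosSemidef ∧ ρ.trace = 1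

/-- Apply a real function to a Hermitian matrix via its spectral decomposition
(junk value `0` on non-Hermitian matrices). -/
def matFun (f : ℝ → ℝ) (A : Matrix n n ℂ) : Matrix n n ℂ :=
  if h : A.IsHermitian then
    (h.eigenvectorUnitary : Matrix n n ℂ) *
      Matrix.diagonal (fun i => (f (h.eigenvalues i) : ℂ)) *
      ((h.eigenvectorUnitary : Matrix n n ℂ))ᴴ
  else 0

/-- von Neumann entropy (in bits). -/
def vnEntropy (A : Matrix n n ℂ) : ℝ :=
  if h : A.IsHermitian then (∑ i, Real.negMulLog (h.eigenvalues i)) / Real.log 2 else 0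

/-- Quantum relative entropy `S(ρ‖σ) = Tr ρ (log ρ − log σ)` (in bits). -/
def relEntropy (ρ σ : Matrix n n ℂ) : ℝ :=
  ((ρ * (matFun Real.log ρ - matFun Real.log σ)).trace).re / Real.log 2

/-- Trace norm of a Hermitian matrix: sum of absolute values of eigenvalues. -/
def traceNorm (A : Matrix n n ℂ) : ℝ :=
  if h : A.IsHermitian then ∑ i, |h.eigenvalues i| else 0

end QIT

section Bipartite
variable {a b : Type*} [Fintype a] [Fintype b] [DecidableEq a] [DecidableEq b]

/-- Partial trace over the second subsystem. -/
def ptraceR (M : Matrix (a × b) (a × b) ℂ) : Matrix a a ℂ :=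
  fun i j => ∑ k, M (i, k) (j, k)

/-- Partial trace over the first subsystem. -/
def ptraceL (M : Matrix (a × b) (a × b) ℂ) : Matrix b b ℂ :=
  fun i j => ∑ k, M (k, i) (k, j)

/-- Quantum mutual information `I(A:B) = S(A) + S(B) − S(AB)` of a bipartite state. -/
def mutualInfo (ρ : Matrix (a × b) (a × b) ℂ) : ℝ :=
  vnEntropy (ptraceR ρ) + vnEntropy (ptraceL ρ) - vnEntropy ρ

end Bipartite

section CQ
variable {X m : Type*} [Fintype X] [Fintype m] [DecidableEq X] [DecidableEq m]

/-- The classical-quantum state `E_{x←p}[|x⟩⟨x| ⊗ ρ_x]`. -/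
def cqState (p : X → ℝ) (ρ : X → Matrix m m ℂ) : Matrix (X × m) (X × m) ℂ :=
  fun xi yj => if xi.1 = yj.1 then (p xi.1 : ℂ) * ρ xi.1 xi.2 yj.2 else 0

end CQ

/-- Probability distributions on a finite type. -/
def FinDist (X : Type*) [Fintype X] : Type _ :=
  {p : X → ℝ // (∀ x, 0 ≤ p x) ∧ ∑ x, p x = 1}

instance (X : Type*) [Fintype X] [Nonempty X] : Nonempty (FinDist X) := by
  refine ⟨⟨fun _ => 1 / Fintype.card X, fun x => by positivity, ?_⟩⟩
  have h : (Fintype.card X : ℝ) ≠ 0 := by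
    exact_mod_cast Fintype.card_ne_zero
  rw [Finset.sum_const, Finset.card_univ, nsmul_eq_mul, mul_one_div_cancel h]

/-- Capacity of a classical-quantum channel. -/
def capacity {X m : Type*} [Fintype X] [DecidableEq X] [Fintype m] [DecidableEq m]
    (E : X → Matrix m m ℂ) : ℝ :=
  ⨆ p : FinDist X, mutualInfo (cqState p.1 E)

/-- Kullback–Leibler divergence (in bits) between finitely supported distributions. -/
def klDiv {Y : Type*} [Fintype Y] (P Q : Y → ℝ) : ℝ :=
  ∑ y, P y * Real.logb 2 (P y / Q y)

/-- ℓ₁ distance between distributions. -/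
def l1Dist {Y : Type*} [Fintype Y] (P Q : Y → ℝ) : ℝ := ∑ y, |P y - Q y|

/-- Binary entropy function (in bits). -/
def binH (p : ℝ) : ℝ := Real.binEntropy p / Real.log 2


lemma aux_log_le (t : ℝ) (ht : 0 < t) : Real.log t ≤ t / Real.exp 1 := by
  have h := Real.log_le_sub_one_of_pos (show 0 < t / Real.exp 1 by positivity)
  rw [Real.log_div ht.ne' (Real.exp_ne_zero 1), Real.log_exp] at h
  linarith

lemma aux_term_lb (p q : ℝ) (hp : 0 ≤ p) (hq : 0 ≤ q) (habs : q = 0 → p = 0) :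
    -(q * (Real.exp 1 * Real.log 2)⁻¹) ≤ p * Real.logb 2 (p / q) := by
  have hln2 : 0 < Real.log 2 := Real.log_pos one_lt_two
  have he : 0 < Real.exp 1 := Real.exp_pos 1
  rcases eq_or_lt_of_le hp with hp0 | hp0
  · rw [← hp0]
    simp only [zero_mul]
    have : 0 ≤ q * (Real.exp 1 * Real.log 2)⁻¹ := by positivity
    linarith
  · have hq0 : 0 < q := by
      rcases eq_or_lt_of_le hq with h | h
      · exact absurd (habs h.symm) hp0.ne'
      · exact h
    have hlog : Real.log (q / p) ≤ (q / p) / Real.exp 1 := aux_log_le _ (by positivity)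
    have h1 : p * Real.log (q / p) ≤ q / Real.exp 1 := by
      calc p * Real.log (q / p) ≤ p * ((q / p) / Real.exp 1) :=
            mul_le_mul_of_nonneg_left hlog hp
        _ = q / Real.exp 1 := by field_simp
    have h2 : Real.log (p / q) = -Real.log (q / p) := by
      rw [← Real.log_inv]; congr 1; field_simp
    rw [Real.logb, h2]
    have e1 : p * (-Real.log (q / p) / Real.log 2)
        = (-(p * Real.log (q / p))) * (Real.log 2)⁻¹ := by ring
    have e2 : -(q * (Real.exp 1 * Real.log 2)⁻¹)
        = (-(q / Real.exp 1)) * (Real.log 2)⁻¹ := by rw [mul_inv]; ring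
    rw [e1, e2]
    exact mul_le_mul_of_nonneg_right (by linarith) (by positivity)

lemma aux_c_lt_one : (Real.exp 1 * Real.log 2)⁻¹ < 1 := by
  have h2 : Real.exp 1 * Real.log 2 > 1 := by
    have he : (2:ℝ) < Real.exp 1 := by
      have := Real.add_one_le_exp 1
      nlinarith [Real.exp_pos 1, Real.quadratic_le_exp_of_nonneg (by norm_num : (0:ℝ) ≤ 1)]
    have hl : Real.log 2 > 1/2 := by
      have : Real.exp (1/2) < 2 := by
        nlinarith [Real.exp_one_lt_d9, Real.exp_pos (1/2), Real.exp_add (1/2) (1/2)]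
      calc (1:ℝ)/2 = Real.log (Real.exp (1/2)) := (Real.log_exp _).symm
        _ < Real.log 2 := Real.log_lt_log (Real.exp_pos _) this
    nlinarith
  rw [inv_lt_one_iff₀]
  right; exact h2

set_option maxHeartbeats 2000000 in
/-- classical substate theorem. -/
theorem stmt11_classical_substate
    {Y : Type} [Fintype Y] (P Q : Y → ℝ)
    (hP0 : ∀ y, 0 ≤ P y) (hP1 : ∑ y, P y = 1)
    (hQ0 : ∀ y, 0 ≤ Q y) (hQ1 : ∑ y, Q y = 1)
    (habs : ∀ y, Q y = 0 → P y = 0)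
    (r : ℝ) (hr : 1 < r) :
    ∃ Pt R : Y → ℝ,
      (∀ y, 0 ≤ Pt y) ∧ (∑ y, Pt y = 1) ∧
      (∀ y, 0 ≤ R y) ∧ (∑ y, R y = 1) ∧
      l1Dist P Pt ≤ 2 / r ∧
      ∀ y, Q y = ((r - 1) / (r * (2 : ℝ) ^ (r * (klDiv P Q + 1)))) * Pt y +
        (1 - (r - 1) / (r * (2 : ℝ) ^ (r * (klDiv P Q + 1)))) * R y := by
  classical
  have hr0 : (0:ℝ) < r := by linarith
  have hln2 : 0 < Real.log 2 := Real.log_pos one_lt_two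
  set c : ℝ := (Real.exp 1 * Real.log 2)⁻¹ with hc
  have hc0 : 0 ≤ c := by positivity
  have hc1 : c < 1 := aux_c_lt_one
  set k : ℝ := klDiv P Q + 1 with hk
  -- lower bound on klDiv
  have hterm : ∀ y, -(Q y * c) ≤ P y * Real.logb 2 (P y / Q y) :=
    fun y => aux_term_lb _ _ (hP0 y) (hQ0 y) (habs y)
  have hD : -c ≤ klDiv P Q := by
    have h := Finset.sum_le_sum (fun y (_ : y ∈ Finset.univ) => hterm y)
    have hs : ∑ y, -(Q y * c) = -c := by
      rw [Finset.sum_neg_distrib, ← Finset.sum_mul, hQ1, one_mul]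
    rw [hs] at h
    exact h
  have hk0 : 0 < k := by rw [hk]; linarith
  have hrk : 0 ≤ r * k := le_of_lt (mul_pos hr0 hk0)
  set E : ℝ := (2:ℝ) ^ (r * k) with hE
  have hE0 : 0 < E := Real.rpow_pos_of_pos (by norm_num) _
  have hE1 : 1 ≤ E := by
    rw [hE]
    calc (1:ℝ) = (2:ℝ) ^ (0:ℝ) := (Real.rpow_zero 2).symm
      _ ≤ (2:ℝ) ^ (r * k) := Real.rpow_le_rpow_of_exponent_le (by norm_num) hrk
  set B : Finset Y := Finset.univ.filter (fun y => Q y * E < P y) with hB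
  set pB : ℝ := ∑ y ∈ B, P y with hpB
  have hpB0 : 0 ≤ pB := Finset.sum_nonneg fun y _ => hP0 y
  -- on B, logb is large
  have hlogB : ∀ y ∈ B, r * k ≤ Real.logb 2 (P y / Q y) := by
    intro y hy
    rw [hB, Finset.mem_filter] at hy
    have hy' := hy.2
    have hPy : 0 < P y := lt_of_le_of_lt (mul_nonneg (hQ0 y) hE0.le) hy'
    have hQy : 0 < Q y := by
      rcases eq_or_lt_of_le (hQ0 y) with h | h
      · exact absurd (habs y h.symm) hPy.ne'
      · exact h
    have hEPQ : E < P y / Q y := (lt_div_iff₀ hQy).mpr (by linarith [hy'])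
    calc r * k = Real.logb 2 E := by
          rw [hE, Real.logb_rpow (by norm_num) (by norm_num)]
      _ ≤ Real.logb 2 (P y / Q y) :=
        Real.logb_le_logb_of_le (by norm_num) hE0 (le_of_lt hEPQ)
  -- Markov bound
  have h1 : r * k * pB ≤ ∑ y ∈ B, P y * Real.logb 2 (P y / Q y) := by
    rw [hpB, Finset.mul_sum]
    refine Finset.sum_le_sum fun y hy => ?_
    rw [mul_comm (r * k) (P y)]
    exact mul_le_mul_of_nonneg_left (hlogB y hy) (hP0 y)
  have h2 : ∑ y ∈ B, P y * Real.logb 2 (P y / Q y) ≤ klDiv P Q + c := by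
    have hsplit := Finset.sum_filter_add_sum_filter_not Finset.univ
      (fun y => Q y * E < P y) (fun y => P y * Real.logb 2 (P y / Q y))
    have hGlb : -c ≤ ∑ y ∈ Finset.univ.filter (fun y => ¬ Q y * E < P y),
        P y * Real.logb 2 (P y / Q y) := by
      have hle := Finset.sum_le_sum
        (fun y (_ : y ∈ Finset.univ.filter (fun y => ¬ Q y * E < P y)) => hterm y)
      have hQle : ∑ y ∈ Finset.univ.filter (fun y => ¬ Q y * E < P y), Q y ≤ 1 := by
        rw [← hQ1]
        exact Finset.sum_le_sum_of_subset_of_nonneg (Finset.filter_subset _ _)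
          (fun y _ _ => hQ0 y)
      have : ∑ y ∈ Finset.univ.filter (fun y => ¬ Q y * E < P y), -(Q y * c)
          = -((∑ y ∈ Finset.univ.filter (fun y => ¬ Q y * E < P y), Q y) * c) := by
        rw [Finset.sum_neg_distrib, ← Finset.sum_mul]
      rw [this] at hle
      nlinarith
    have : klDiv P Q = (∑ y ∈ B, P y * Real.logb 2 (P y / Q y)) +
        ∑ y ∈ Finset.univ.filter (fun y => ¬ Q y * E < P y),
          P y * Real.logb 2 (P y / Q y) := by
      rw [klDiv, ← hsplit, hB]
    linarith
  have hMarkov : r * pB ≤ 1 := by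
    have h3 : r * k * pB ≤ k := by rw [hk] at *; linarith
    nlinarith
  have hpBr : pB ≤ 1 / r := by rw [le_div_iff₀ hr0]; linarith
  set pG : ℝ := 1 - pB with hpG
  have hpGpos : 0 < pG := by
    have : 1 / r < 1 := by rw [div_lt_one hr0]; exact hr
    rw [hpG]; linarith
  have hpGle1 : pG ≤ 1 := by rw [hpG]; linarith
  have hsumG : ∑ y ∈ Finset.univ.filter (fun y => ¬ Q y * E < P y), P y = pG := by
    have hsplit := Finset.sum_filter_add_sum_filter_not Finset.univ
      (fun y => Q y * E < P y) P
    rw [hP1] at hsplit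
    rw [hpG, hpB, hB]; linarith
  set ε : ℝ := (r - 1) / (r * E) with hε
  have hε0 : 0 < ε := by
    rw [hε]; exact div_pos (by linarith) (mul_pos hr0 hE0)
  have hε1 : ε < 1 := by
    rw [hε, div_lt_one (mul_pos hr0 hE0)]
    nlinarith
  set Pt : Y → ℝ := fun y => if Q y * E < P y then 0 else P y / pG with hPt
  have hPtnn : ∀ y, 0 ≤ Pt y := by
    intro y; rw [hPt]; dsimp only
    split
    · exact le_refl 0
    · exact div_nonneg (hP0 y) hpGpos.le
  have hPtsum : ∑ y, Pt y = 1 := by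
    rw [hPt]
    have : ∀ y, (if Q y * E < P y then (0:ℝ) else P y / pG)
        = if ¬ Q y * E < P y then P y / pG else 0 := by
      intro y; rw [ite_not]
    simp_rw [this]
    rw [← Finset.sum_filter, ← Finset.sum_div, hsumG, div_self hpGpos.ne']
  have hKey : ∀ y, ε * Pt y ≤ Q y := by
    intro y
    rw [hPt]; dsimp only
    split
    · rw [mul_zero]; exact hQ0 y
    · rename_i h
      push_neg at h
      rw [← mul_div_assoc, div_le_iff₀ hpGpos, hε, div_mul_eq_mul_div,
        div_le_iff₀ (mul_pos hr0 hE0)]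
      have hA : (r - 1) * P y ≤ (r - 1) * (Q y * E) :=
        mul_le_mul_of_nonneg_left h (by linarith)
      have hB' : (r - 1) * (Q y * E) ≤ (r * pG) * (Q y * E) := by
        have hrpG : r - 1 ≤ r * pG := by rw [hpG]; nlinarith
        exact mul_le_mul_of_nonneg_right hrpG (mul_nonneg (hQ0 y) hE0.le)
      nlinarith
  set R : Y → ℝ := fun y => (Q y - ε * Pt y) / (1 - ε) with hR
  refine ⟨Pt, R, hPtnn, hPtsum, ?_, ?_, ?_, ?_⟩
  · intro y
    rw [hR]; dsimp only
    exact div_nonneg (by linarith [hKey y]) (by linarith)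
  · rw [hR]
    simp_rw [div_eq_mul_inv]
    rw [← Finset.sum_mul, Finset.sum_sub_distrib, ← Finset.mul_sum, hQ1, hPtsum, mul_one,
      ← div_eq_mul_inv]
    exact div_self (by linarith)
  · -- l1 bound
    rw [l1Dist]
    have hsplit := Finset.sum_filter_add_sum_filter_not Finset.univ
      (fun y => Q y * E < P y) (fun y => |P y - Pt y|)
    have hBsum : ∑ y ∈ Finset.univ.filter (fun y => Q y * E < P y), |P y - Pt y| = pB := by
      rw [hpB, hB]
      refine Finset.sum_congr rfl fun y hy => ?_
      rw [Finset.mem_filter] at hy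
      rw [hPt]; dsimp only
      rw [if_pos hy.2, sub_zero, abs_of_nonneg (hP0 y)]
    have hGsum : ∑ y ∈ Finset.univ.filter (fun y => ¬ Q y * E < P y), |P y - Pt y|
        = 1 - pG := by
      have : ∀ y ∈ Finset.univ.filter (fun y => ¬ Q y * E < P y),
          |P y - Pt y| = P y / pG - P y := by
        intro y hy
        rw [Finset.mem_filter] at hy
        rw [hPt]; dsimp only
        rw [if_neg hy.2, abs_sub_comm]
        refine abs_of_nonneg ?_
        have : P y ≤ P y / pG := by
          rw [le_div_iff₀ hpGpos]
          nlinarith [hP0 y]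
        linarith
      rw [Finset.sum_congr rfl this, Finset.sum_sub_distrib, ← Finset.sum_div, hsumG,
        div_self hpGpos.ne']
    rw [← hsplit, hBsum, hGsum]
    have : (2:ℝ) / r = 2 * (1 / r) := by ring
    rw [hpG, this]
    linarith
  · intro y
    rw [hR]; dsimp only
    rw [mul_div_cancel₀ _ (by linarith : (1:ℝ) - ε ≠ 0)]
    ring
end
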